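/- Fix β > 0 and a finite set P of banks with assets A_i > 0 and demands s_i ∈ ℝ. (i) If some bank has s_i < 0, then there exists a nonempty subset B ⊆ {i ∈ P : s_i < 0} such that the clustered clearing equilibrium of the subsystem on B has all components negative, and B is maximal in the sense that for every j ∈ P∖B with s_j ≤ 0, the clustered clearing equilibrium of the subsystem on B ∪ {j} has at least one nonnegative component. (ii) Symmetrically, if some bank has s_j > 0, then there exists a nonempty subset B' ⊆ {j ∈ P : s_j ≥ 0} such that the clustered equilibrium of the subsystem on B' has all components nonnegative, and for every j ∈ P∖B' with s_j ≥ 0 the clustered equilibrium of the subsystem on B' ∪ {j} has at least one negative component. -/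

import Mathlib

/-- Solvability of the one-bank subsystem on the bailout side. -/
lemma single_neg (β : ℝ) (hβ : 0 < β) (a v : ℝ) (ha : 0 < a) (hv : v < 0) :
    ∃ c : ℝ, c < 0 ∧ v = c + (1 - Real.exp (-β * c)) * a := by
  set f : ℝ → ℝ := fun c => c + (1 - Real.exp (-β * c)) * a with hf
  have hcont : Continuous f := by fun_prop
  have hfM : f (v - 1) ≤ v - 1 := by
    have h1 : (1:ℝ) ≤ Real.exp (-β * (v - 1)) := Real.one_le_exp (by nlinarith)
    simp only [hf]
    nlinarith
  have hf0 : f 0 = 0 := by simp [hf]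
  have hsub := intermediate_value_Icc (a := v - 1) (b := 0) (by linarith)
    hcont.continuousOn
  have hmem : v ∈ Set.Icc (f (v - 1)) (f 0) := by
    constructor <;> [linarith; linarith]
  obtain ⟨c, hc, hfc⟩ := hsub hmem
  refine ⟨c, ?_, hfc.symm⟩
  rcases lt_or_eq_of_le hc.2 with h | h
  · exact h
  · exfalso; rw [h] at hfc; rw [hf0] at hfc; linarith

/-- Solvability of the one-bank subsystem on the bail-in side. -/
lemma single_pos (β : ℝ) (hβ : 0 < β) (a v : ℝ) (ha : 0 < a) (hv : 0 < v) :
    ∃ c : ℝ, 0 ≤ c ∧ v = c + (1 - Real.exp (-β * c)) * a := by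
  set f : ℝ → ℝ := fun c => c + (1 - Real.exp (-β * c)) * a with hf
  have hcont : Continuous f := by fun_prop
  have hf0 : f 0 = 0 := by simp [hf]
  have hfv : v ≤ f v := by
    have h1 : Real.exp (-β * v) ≤ 1 := by
      rw [Real.exp_le_one_iff]; nlinarith
    simp only [hf]
    nlinarith
  have hsub := intermediate_value_Icc (a := 0) (b := v) (le_of_lt hv)
    hcont.continuousOn
  have hmem : v ∈ Set.Icc (f 0) (f v) := by
    constructor <;> [linarith; linarith]
  obtain ⟨c, hc, hfc⟩ := hsub hmem
  exact ⟨c, hc.1, hfc.symm⟩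

/-- Weak Decomposition Theorem (part 1 of Theorem 1): the maximal bailout
cluster and the maximal bail-in cluster exist. (i) If some bank has `s_i < 0`,
there is a nonempty set `B` of banks with negative demand whose subsystem
equilibrium is entirely negative and which cannot be enlarged by any remaining
bank with `s ≤ 0` while keeping all components negative. (ii) Symmetrically
for the bail-in side. -/
theorem weak_decomposition
    {P : Type*} [Fintype P] [DecidableEq P] (β : ℝ) (hβ : 0 < β)
    (A s : P → ℝ) (hA : ∀ i, 0 < A i) :
    ((∃ i, s i < 0) →
      ∃ B : Finset P, B.Nonempty ∧ (∀ i ∈ B, s i < 0) ∧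
        (∃ x : P → ℝ,
          (∀ i ∈ B, s i = x i + (1 - Real.exp (-β * ∑ j ∈ B, x j)) * A i) ∧
          (∀ i ∈ B, x i < 0)) ∧
        (∀ j ∉ B, s j ≤ 0 →
          ∀ y : P → ℝ,
            (∀ i ∈ insert j B,
              s i = y i + (1 - Real.exp (-β * ∑ k ∈ insert j B, y k)) * A i) →
            ∃ i ∈ insert j B, 0 ≤ y i)) ∧
    ((∃ j, 0 < s j) →
      ∃ B' : Finset P, B'.Nonempty ∧ (∀ j ∈ B', 0 ≤ s j) ∧
        (∃ x : P → ℝ,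
          (∀ i ∈ B', s i = x i + (1 - Real.exp (-β * ∑ j ∈ B', x j)) * A i) ∧
          (∀ i ∈ B', 0 ≤ x i)) ∧
        (∀ j ∉ B', 0 ≤ s j →
          ∀ y : P → ℝ,
            (∀ i ∈ insert j B',
              s i = y i + (1 - Real.exp (-β * ∑ k ∈ insert j B', y k)) * A i) →
            ∃ i ∈ insert j B', y i < 0)) := by
  constructor
  · -- bailout side
    rintro ⟨i, hi⟩
    set pred : Finset P → Prop := fun B => B.Nonempty ∧ (∀ i ∈ B, s i < 0) ∧
      ∃ x : P → ℝ,
        (∀ i ∈ B, s i = x i + (1 - Real.exp (-β * ∑ j ∈ B, x j)) * A i) ∧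
        (∀ i ∈ B, x i < 0) with hpred
    -- seed: the singleton {i}
    obtain ⟨c, hc, hceq⟩ := single_neg β hβ (A i) (s i) (hA i) hi
    have hseed : pred {i} := by
      refine ⟨Finset.singleton_nonempty i, ?_, fun _ => c, ?_, ?_⟩
      · intro j hj; rw [Finset.mem_singleton] at hj; subst hj; exact hi
      · intro j hj; rw [Finset.mem_singleton] at hj; subst hj
        simpa using hceq
      · intro j _; exact hc
    -- take a cardinality-maximal cluster
    obtain ⟨B, hB, hmax⟩ := Set.Finite.exists_maximalFor
      (fun B : Finset P => B.card) {B | pred B} (Set.toFinite _) ⟨{i}, hseed⟩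
    obtain ⟨hBne, hBneg, hBx⟩ := hB
    refine ⟨B, hBne, hBneg, hBx, ?_⟩
    intro j hj hsj y hy
    by_contra hcon
    push_neg at hcon
    -- all y-components on insert j B are negative, so insert j B is a bigger cluster
    have hsum : ∑ k ∈ insert j B, y k < 0 :=
      Finset.sum_neg hcon (Finset.insert_nonempty j B)
    have hexp : 1 < Real.exp (-β * ∑ k ∈ insert j B, y k) := by
      rw [Real.one_lt_exp_iff]; nlinarith
    have hsj' : s j < 0 := by
      have := hy j (Finset.mem_insert_self j B)
      have hyj := hcon j (Finset.mem_insert_self j B)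
      nlinarith [hA j]
    have hpred' : pred (insert j B) := by
      refine ⟨Finset.insert_nonempty j B, ?_, y, hy, hcon⟩
      intro k hk
      rcases Finset.mem_insert.mp hk with h | h
      · subst h; exact hsj'
      · exact hBneg k h
    have hcard := hmax (show insert j B ∈ {B | pred B} from hpred')
      (Finset.card_le_card (Finset.subset_insert j B))
    beta_reduce at hcard
    rw [Finset.card_insert_of_notMem hj] at hcard
    omega
  · -- bail-in side
    rintro ⟨j, hj⟩
    set pred : Finset P → Prop := fun B => B.Nonempty ∧ (∀ i ∈ B, 0 ≤ s i) ∧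
      ∃ x : P → ℝ,
        (∀ i ∈ B, s i = x i + (1 - Real.exp (-β * ∑ j ∈ B, x j)) * A i) ∧
        (∀ i ∈ B, 0 ≤ x i) with hpred
    obtain ⟨c, hc, hceq⟩ := single_pos β hβ (A j) (s j) (hA j) hj
    have hseed : pred {j} := by
      refine ⟨Finset.singleton_nonempty j, ?_, fun _ => c, ?_, ?_⟩
      · intro k hk; rw [Finset.mem_singleton] at hk; subst hk; exact le_of_lt hj
      · intro k hk; rw [Finset.mem_singleton] at hk; subst hk
        simpa using hceq
      · intro k _; exact hc
    obtain ⟨B, hB, hmax⟩ := Set.Finite.exists_maximalFor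
      (fun B : Finset P => B.card) {B | pred B} (Set.toFinite _) ⟨{j}, hseed⟩
    obtain ⟨hBne, hBpos, hBx⟩ := hB
    refine ⟨B, hBne, hBpos, hBx, ?_⟩
    intro k hk hsk y hy
    by_contra hcon
    push_neg at hcon
    have hpred' : pred (insert k B) := by
      refine ⟨Finset.insert_nonempty k B, ?_, y, hy, hcon⟩
      intro l hl
      rcases Finset.mem_insert.mp hl with h | h
      · subst h; exact hsk
      · exact hBpos l h
    have hcard := hmax (show insert k B ∈ {B | pred B} from hpred')
      (Finset.card_le_card (Finset.subset_insert k B))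
    beta_reduce at hcard
    rw [Finset.card_insert_of_notMem hk] at hcard
    omega
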